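/- Let z be a real number with z ≥ 3 and let t ≥ 1 be a natural number. Then (2(z−1)^(t+1) − 2)/(z−2) + (∑_{i=1}^{t} (z−1)·z^(t−i)·(2(z−1)^i − 2)/(z−2)) + 2(z−1)^t·(t+2) + (∑_{j=2}^{t+1} 2(z−1)^(j−2)·z^(t−j+1)·j) = 2·((2z+1)·z^t − 2·(z−1)^(t+1)). -/

import Mathlib

theorem degree_sum_eq_twice_edges (z : ℝ) (hz : 3 ≤ z) (t : ℕ) (ht : 1 ≤ t) :
    (2 * (z - 1) ^ (t + 1) - 2) / (z - 2)
      + (∑ i ∈ Finset.Icc 1 t, (z - 1) * z ^ (t - i) * ((2 * (z - 1) ^ i - 2) / (z - 2)))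
      + 2 * (z - 1) ^ t * ((t : ℝ) + 2)
      + (∑ j ∈ Finset.Icc 2 (t + 1), 2 * (z - 1) ^ (j - 2) * z ^ (t + 1 - j) * (j : ℝ))
      = 2 * ((2 * z + 1) * z ^ t - 2 * (z - 1) ^ (t + 1)) := by
  have hz2 : z - 2 ≠ 0 := by intro h; nlinarith
  induction t, ht using Nat.le_induction with
  | base =>
    norm_num [show Finset.Icc 1 1 = {1} from rfl, show Finset.Icc 2 2 = {2} from rfl]
    field_simp
    ring
  | succ n hn ih =>
    have h1 : (∑ i ∈ Finset.Icc 1 (n + 1),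
        (z - 1) * z ^ (n + 1 - i) * ((2 * (z - 1) ^ i - 2) / (z - 2)))
        = z * (∑ i ∈ Finset.Icc 1 n, (z - 1) * z ^ (n - i) * ((2 * (z - 1) ^ i - 2) / (z - 2)))
          + (z - 1) * ((2 * (z - 1) ^ (n + 1) - 2) / (z - 2)) := by
      rw [Finset.sum_Icc_succ_top (by omega), Finset.mul_sum]
      congr 1
      · refine Finset.sum_congr rfl fun i hi => ?_
        have hi' : i ≤ n := (Finset.mem_Icc.mp hi).2
        have : n + 1 - i = (n - i) + 1 := by omega
        rw [this, pow_succ]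
        ring
      · simp
    have h2 : (∑ j ∈ Finset.Icc 2 (n + 1 + 1),
        2 * (z - 1) ^ (j - 2) * z ^ (n + 1 + 1 - j) * (j : ℝ))
        = z * (∑ j ∈ Finset.Icc 2 (n + 1), 2 * (z - 1) ^ (j - 2) * z ^ (n + 1 - j) * (j : ℝ))
          + 2 * (z - 1) ^ n * ((n : ℝ) + 2) := by
      rw [Finset.sum_Icc_succ_top (by omega), Finset.mul_sum]
      congr 1
      · refine Finset.sum_congr rfl fun j hj => ?_
        have hj' : j ≤ n + 1 := (Finset.mem_Icc.mp hj).2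
        have : n + 1 + 1 - j = (n + 1 - j) + 1 := by omega
        rw [this, pow_succ]
        ring
      · have e1 : n + 1 + 1 - 2 = n := by omega
        have e2 : n + 1 + 1 - (n + 1 + 1) = 0 := by omega
        rw [e1, e2]
        push_cast
        ring
    rw [h1, h2]
    field_simp at ih ⊢
    push_cast
    linear_combination z * ih
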